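/- Let A be a simple finite-dimensional algebra over a field F of characteristic zero with a comultiplication Δ such that the Drinfeld double D(A) is a direct sum A₁ ⊕ A₂ of two proper simple ideals, and let φ₁, φ₂ : A* → A be the linear maps with f − φᵢ(f) ∈ Aᵢ for all f ∈ A*. Then for every a ∈ A there exists a unique f ∈ A* such that a = −φ₁(f) + φ₂(f); consequently the map ψ : A → A* defined by ψ(a) = f is a linear bijection. -/
import Mathlib


open TensorProduct

/-- `I` is a (two-sided) ideal for the product `prod`. -/
def IsIdealP {F M : Type*} [Field F] [AddCommGroup M] [Module F M]
    (prod : M → M → M) (I : Submodule F M) : Prop :=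
  ∀ x ∈ I, ∀ y : M, prod x y ∈ I ∧ prod y x ∈ I

/-- The ideal `I` is simple as an algebra with the restricted product. -/
def IsSimpleIdealP {F M : Type*} [Field F] [AddCommGroup M] [Module F M]
    (prod : M → M → M) (I : Submodule F M) : Prop :=
  (∃ x ∈ I, ∃ y ∈ I, prod x y ≠ 0) ∧
    ∀ J : Submodule F M, J ≤ I →
      (∀ x ∈ J, ∀ y ∈ I, prod x y ∈ J ∧ prod y x ∈ J) → J = ⊥ ∨ J = I

/-- The multiplication of the Drinfeld double `D(A) = A ⊕ A*` associated with the
bilinear product `mul` and the comultiplication `Δ`: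
`(a + f)(b + g) = (ab + f⇀b + a↼g) + (fg + f⇽b + a⇁g)`. -/
noncomputable def dmul {F A : Type*} [Field F] [AddCommGroup A] [Module F A]
    (mul : A →ₗ[F] A →ₗ[F] A) (Δ : A →ₗ[F] A ⊗[F] A)
    (p q : A × Module.Dual F A) : A × Module.Dual F A :=
  (mul p.1 q.1
      + TensorProduct.rid F A (LinearMap.lTensor A p.2 (Δ q.1))
      + TensorProduct.lid F A (LinearMap.rTensor A q.2 (Δ p.1)),
    Δ.dualMap (TensorProduct.dualDistrib F A A (p.2 ⊗ₜ[F] q.2))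
      + p.2.comp (mul q.1)
      + q.2.comp (mul.flip p.1))

theorem stmt3 {F A : Type*} [Field F] [CharZero F] [AddCommGroup A] [Module F A]
    [FiniteDimensional F A] (mul : A →ₗ[F] A →ₗ[F] A)
    -- `A` is simple
    (hsimple : (∃ x y : A, mul x y ≠ 0) ∧
      ∀ I : Submodule F A, (∀ x ∈ I, ∀ y : A, mul x y ∈ I ∧ mul y x ∈ I) → I = ⊥ ∨ I = ⊤)
    -- a comultiplication on `A`
    (Δ : A →ₗ[F] A ⊗[F] A)
    -- `D(A) = A₁ ⊕ A₂`, a direct sum of two proper simple ideals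
    (A₁ A₂ : Submodule F (A × Module.Dual F A))
    (h1b : A₁ ≠ ⊥) (h1t : A₁ ≠ ⊤) (h2b : A₂ ≠ ⊥) (h2t : A₂ ≠ ⊤)
    (hcompl : IsCompl A₁ A₂)
    (hid1 : IsIdealP (dmul mul Δ) A₁) (hid2 : IsIdealP (dmul mul Δ) A₂)
    (hs1 : IsSimpleIdealP (dmul mul Δ) A₁) (hs2 : IsSimpleIdealP (dmul mul Δ) A₂)
    -- the linear maps `φᵢ` with `f - φᵢ(f) ∈ Aᵢ` for all `f ∈ A*`
    (φ₁ φ₂ : Module.Dual F A →ₗ[F] A)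
    (hφ1 : ∀ f : Module.Dual F A, ((-φ₁ f, f) : A × Module.Dual F A) ∈ A₁)
    (hφ2 : ∀ f : Module.Dual F A, ((-φ₂ f, f) : A × Module.Dual F A) ∈ A₂)
    :
    (∀ c : A, ∃! f : Module.Dual F A, c = -φ₁ f + φ₂ f) ∧
      ∃ ψ : A ≃ₗ[F] Module.Dual F A, ∀ c : A, c = -φ₁ (ψ c) + φ₂ (ψ c) := by
  classical
  set L : Module.Dual F A →ₗ[F] A := φ₂ - φ₁ with hLdef
  have hLapp : ∀ f, L f = -φ₁ f + φ₂ f := by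
    intro f
    simp only [hLdef, LinearMap.sub_apply]
    abel
  -- injectivity of L
  have hker : ∀ f : Module.Dual F A, L f = 0 → f = 0 := by
    intro f hf
    have heq : φ₂ f = φ₁ f := by
      have h0 : φ₂ f - φ₁ f = 0 := by
        simpa [hLdef, LinearMap.sub_apply] using hf
      exact sub_eq_zero.mp h0
    have hmem1 := hφ1 f
    have hmem2 := hφ2 f
    rw [heq] at hmem2
    have : ((-φ₁ f, f) : A × Module.Dual F A) ∈ A₁ ⊓ A₂ := ⟨hmem1, hmem2⟩
    have hz : ((-φ₁ f, f) : A × Module.Dual F A) = 0 := by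
      have := hcompl.inf_eq_bot ▸ this
      simpa using this
    exact congrArg Prod.snd hz
  have hinj : Function.Injective L := by
    rw [← LinearMap.ker_eq_bot, LinearMap.ker_eq_bot']
    exact hker
  -- surjectivity of L via dimension count
  have hsurj : Function.Surjective L := by
    let b := Module.finBasis F A
    let e : A ≃ₗ[F] Module.Dual F A := b.toDualEquiv
    have hinjE : Function.Injective (e.toLinearMap ∘ₗ L) :=
      e.injective.comp hinj
    have hsurjE : Function.Surjective (e.toLinearMap ∘ₗ L) :=
      (LinearMap.injective_iff_surjective).mp hinjE
    intro c
    obtain ⟨f, hf⟩ := hsurjE (e c)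
    exact ⟨f, e.injective (by simpa using hf)⟩
  have hbij : Function.Bijective L := ⟨hinj, hsurj⟩
  constructor
  · intro c
    obtain ⟨f, hf⟩ := hsurj c
    refine ⟨f, show c = -φ₁ f + φ₂ f by rw [← hLapp, hf], ?_⟩
    intro g hg
    exact hinj (by rw [hLapp, ← hg, hf])
  · refine ⟨(LinearEquiv.ofBijective L hbij).symm, fun c => ?_⟩
    rw [← hLapp]
    exact ((LinearEquiv.ofBijective L hbij).apply_symm_apply c).symm
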